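/- Let m be an odd positive integer and let D_{2m} = ⟨a,b | a^{2m} = b^2 = 1, bab = a^{-1}⟩ be the dihedral group of order 4m. Let S₁ = {a^m}, S₂ = b⟨a²⟩ = {ba^{2k} : 0 ≤ k ≤ m−1}, and S = S₁ ∪ S₂. Then the Cayley graph X(D_{2m},S) is connected and integral. -/

import Mathlib

open DihedralGroup Polynomial

/-- The degree-2 irreducible character `χ_h` of the dihedral group `D_n`:
`χ_h(a^k) = 2cos(2khπ/n)` and `χ_h(ba^k) = 0`. -/
noncomputable def chi (n h : ℕ) : DihedralGroup n → ℝ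
  | .r k => 2 * Real.cos (2 * k.val * h * Real.pi / n)
  | .sr _ => 0

/-- `χ(A) = Σ_{x ∈ A} χ(x)`. -/
noncomputable def chiSum (n h : ℕ) (A : Set (DihedralGroup n)) : ℝ :=
  ∑ᶠ x ∈ A, chi n h x

/-- `χ(A²) = Σ_{x,y ∈ A} χ(xy)`, over ordered pairs. -/
noncomputable def chiSum2 (n h : ℕ) (A : Set (DihedralGroup n)) : ℝ :=
  ∑ᶠ x ∈ A, ∑ᶠ y ∈ A, chi n h (x * y)

/-- The Cayley graph `X(G,S)`: vertices `G`, with `x,y` adjacent iff `x⁻¹y ∈ S`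
(for `S` inverse-closed and not containing `1`). -/
def cayleyGraph {G : Type*} [Group G] (S : Set G) : SimpleGraph G :=
  SimpleGraph.fromRel (fun x y => x⁻¹ * y ∈ S)

open scoped Classical in
/-- The adjacency matrix of a graph, over `ℂ`. -/
noncomputable def adjMat {V : Type*} [Fintype V] (G : SimpleGraph V) : Matrix V V ℂ :=
  Matrix.of fun x y => if G.Adj x y then 1 else 0

/-- A graph is integral if every eigenvalue of its adjacency matrix is an integer. -/
def IsIntegralGraph {V : Type*} [Fintype V] [DecidableEq V] (G : SimpleGraph V) : Prop :=
  ∀ μ ∈ spectrum ℂ (adjMat G), ∃ z : ℤ, μ = (z : ℂ)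

/-- The cyclic subgroup `⟨a⟩` of `D_n`, as a set. -/
def rSet (n : ℕ) : Set (DihedralGroup n) := {x | ∃ k, x = .r k}

/-- The coset `b⟨a⟩` of `D_n`, as a set. -/
def srSet (n : ℕ) : Set (DihedralGroup n) := {x | ∃ k, x = .sr k}

/-- `S` belongs to the Boolean algebra `B(⟨a⟩)`, i.e. `S ⊆ ⟨a⟩` is a union of atoms
`[a^l] = {a^k : gcd(k,n) = gcd(l,n)}`: membership in `S` is constant on each atom. -/
def InBooleanAlgebra (n : ℕ) (S : Set (DihedralGroup n)) : Prop :=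
  S ⊆ rSet n ∧ ∀ k l : ZMod n, Nat.gcd k.val n = Nat.gcd l.val n →
    (DihedralGroup.r k ∈ S ↔ DihedralGroup.r l ∈ S)

/-- The multiplicity of `x` in the multiset `S² = {s₁s₂ : (s₁,s₂) ∈ S × S}` (ordered pairs). -/
noncomputable def sqMult {n : ℕ} (S : Set (DihedralGroup n)) (x : DihedralGroup n) : ℕ :=
  Nat.card {p : DihedralGroup n × DihedralGroup n // p.1 ∈ S ∧ p.2 ∈ S ∧ p.1 * p.2 = x}

/-- The irreducible character `φ_h` of the cyclic group `⟨a⟩` of order `n`: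
`φ_h(a^k) = e^{2πihk/n}`. -/
noncomputable def phi (n h : ℕ) (k : ZMod n) : ℂ :=
  Complex.exp (2 * Real.pi * Complex.I * h * k.val / n)

open DihedralGroup

namespace Stmt8Aux

/-- parity ring hom -/
def par (m : ℕ) : ZMod (2*m) →+* ZMod 2 := ZMod.castHom ⟨m, rfl⟩ (ZMod 2)

variable {m : ℕ}

lemma par_val [NeZero (2*m)] (j : ZMod (2*m)) : par m j = ((j.val : ℕ) : ZMod 2) := by
  conv_lhs => rw [← (show ((j.val : ℕ) : ZMod (2*m)) = j by rw [ZMod.natCast_val, ZMod.cast_id])]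
  rw [map_natCast]

lemma par_natCast (k : ℕ) : par m ((k : ℕ) : ZMod (2*m)) = (k : ZMod 2) := map_natCast _ k

lemma par_m (hmodd : Odd m) : par m ((m : ℕ) : ZMod (2*m)) = 1 := by
  obtain ⟨k, hk⟩ := hmodd
  rw [par_natCast, hk]
  push_cast
  ring_nf
  simp [show ((2:ZMod 2) = 0) by decide]

lemma par_zero_iff [NeZero (2*m)] (j : ZMod (2*m)) : par m j = 0 ↔ 2 ∣ j.val := by
  rw [par_val, ZMod.natCast_eq_zero_iff]

lemma card_fiber [NeZero (2*m)] (c : ZMod 2) :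
    (Finset.univ.filter fun j : ZMod (2*m) => par m j = c).card = m := by
  have h2m : 0 < 2*m := Nat.pos_of_ne_zero (NeZero.ne _)
  have hm : 0 < m := by omega
  have key := Finset.card_bij (s := Finset.range m)
    (t := Finset.univ.filter fun j : ZMod (2*m) => par m j = c)
    (fun k _ => ((2*k + c.val : ℕ) : ZMod (2*m))) ?_ ?_ ?_
  · rw [Finset.card_range] at key; exact key.symm
  · intro k hk
    simp only [Finset.mem_filter, Finset.mem_univ, true_and]
    rw [par_natCast]
    push_cast
    simp [show ((2:ZMod 2) = 0) by decide, ZMod.natCast_val, ZMod.cast_id]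
  · intro k1 h1 k2 h2 heq
    simp only [Finset.mem_range] at h1 h2
    have hc : c.val < 2 := ZMod.val_lt c
    have e1 : ((2*k1 + c.val : ℕ) : ZMod (2*m)).val = 2*k1 + c.val := ZMod.val_cast_of_lt (by omega)
    have e2 : ((2*k2 + c.val : ℕ) : ZMod (2*m)).val = 2*k2 + c.val := ZMod.val_cast_of_lt (by omega)
    have := congrArg ZMod.val heq
    rw [e1, e2] at this
    omega
  · intro j hj
    simp only [Finset.mem_filter, Finset.mem_univ, true_and] at hj
    have hval : j.val < 2*m := ZMod.val_lt j
    have hpar : (j.val : ZMod 2) = c := by rw [← par_val]; exact hj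
    have hc : c.val < 2 := ZMod.val_lt c
    have hmod : j.val % 2 = c.val := by
      have : ((j.val % 2 : ℕ) : ZMod 2) = c := by
        rwa [ZMod.natCast_mod]
      have hlt : j.val % 2 < 2 := Nat.mod_lt _ (by norm_num)
      have := congrArg ZMod.val this
      rwa [ZMod.val_cast_of_lt hlt] at this
    refine ⟨j.val / 2, ?_, ?_⟩
    · simp only [Finset.mem_range]; omega
    · show ((2 * (j.val / 2) + c.val : ℕ) : ZMod (2*m)) = j
      have h' : 2 * (j.val / 2) + c.val = j.val := by omega
      rw [h', ZMod.natCast_val, ZMod.cast_id]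

lemma sum_ind [NeZero (2*m)] (c d : ZMod 2) :
    ∑ j : ZMod (2*m), (if par m j = c then (1:ℂ) else 0) * (if par m j = d then 1 else 0)
      = if c = d then (m:ℂ) else 0 := by
  by_cases hcd : c = d
  · subst hcd
    simp only [if_pos rfl]
    have : ∀ j : ZMod (2*m), (if par m j = c then (1:ℂ) else 0) * (if par m j = c then 1 else 0)
        = if par m j = c then 1 else 0 := by intro j; split_ifs <;> ring
    rw [Finset.sum_congr rfl (fun j _ => this j), Finset.sum_boole]
    simp [card_fiber]
  · rw [if_neg hcd]
    apply Finset.sum_eq_zero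
    intro j _
    split_ifs with h1 h2
    · exact absurd (h1.symm.trans h2) hcd
    all_goals ring


/-- equiv for splitting sums over the dihedral group -/
def dEquiv (n : ℕ) : (ZMod n) ⊕ (ZMod n) ≃ DihedralGroup n where
  toFun i := match i with
    | Sum.inl j => r j
    | Sum.inr j => sr j
  invFun i := match i with
    | r j => Sum.inl j
    | sr j => Sum.inr j
  left_inv := by rintro (x | x) <;> rfl
  right_inv := by rintro (x | x) <;> rfl

lemma sum_dihedral {n : ℕ} [NeZero n] (F : DihedralGroup n → ℂ) :
    ∑ w : DihedralGroup n, F w = (∑ j : ZMod n, F (r j)) + (∑ j : ZMod n, F (sr j)) := by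
  rw [← Equiv.sum_comp (dEquiv n) F, Fintype.sum_sum_type]
  rfl

section Matrices

variable (m : ℕ) [NeZero (2*m)]

/-- convolution-type matrix -/
def Mk (f : DihedralGroup (2*m) → ℂ) : Matrix (DihedralGroup (2*m)) (DihedralGroup (2*m)) ℂ :=
  Matrix.of fun x y => f (x⁻¹ * y)

lemma Mk_mul (f g : DihedralGroup (2*m) → ℂ) :
    Mk m f * Mk m g = Mk m (fun t => ∑ w : DihedralGroup (2*m), f w * g (w⁻¹ * t)) := by
  ext x y
  simp only [Mk, Matrix.mul_apply, Matrix.of_apply]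
  rw [← Equiv.sum_comp (Equiv.mulLeft x) (fun z => f (x⁻¹ * z) * g (z⁻¹ * y))]
  apply Finset.sum_congr rfl
  intro w _
  simp [mul_assoc]

lemma Mk_one : Mk m (fun t => if t = 1 then 1 else 0) = 1 := by
  ext x y
  simp only [Mk, Matrix.of_apply, Matrix.one_apply]
  congr 1
  simp [inv_mul_eq_one, eq_comm]

def fP : DihedralGroup (2*m) → ℂ := fun x => if x = r ((m : ℕ) : ZMod (2*m)) then 1 else 0

def fB : DihedralGroup (2*m) → ℂ
  | .r _ => 0
  | .sr j => if par m j = 0 then 1 else 0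

def fX : DihedralGroup (2*m) → ℂ
  | .r _ => 0
  | .sr j => if par m j = 1 then 1 else 0

def fC : DihedralGroup (2*m) → ℂ
  | .r j => if par m j = 0 then 1 else 0
  | .sr _ => 0

variable {m}

lemma rm_inv : (r ((m : ℕ) : ZMod (2*m)))⁻¹ = r ((m : ℕ) : ZMod (2*m)) := by
  show r (-((m : ℕ) : ZMod (2*m))) = _
  congr 1
  have : ((m : ℕ) : ZMod (2*m)) + ((m : ℕ) : ZMod (2*m)) = ((2*m : ℕ) : ZMod (2*m)) := by
    push_cast; ring
  rw [ZMod.natCast_self] at this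
  linear_combination -this

lemma rm_sq : r ((m : ℕ) : ZMod (2*m)) * r ((m : ℕ) : ZMod (2*m)) = 1 := by
  rw [r_mul_r, one_def]
  congr 1
  have : ((m : ℕ) : ZMod (2*m)) + ((m : ℕ) : ZMod (2*m)) = ((2*m : ℕ) : ZMod (2*m)) := by
    push_cast; ring
  rw [ZMod.natCast_self] at this
  exact this

lemma conv_fP_left (g : DihedralGroup (2*m) → ℂ) (t : DihedralGroup (2*m)) :
    ∑ w : DihedralGroup (2*m), fP m w * g (w⁻¹ * t) = g (r ((m : ℕ) : ZMod (2*m)) * t) := by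
  simp only [fP, ite_mul, one_mul, zero_mul]
  rw [Finset.sum_ite_eq' Finset.univ (r ((m : ℕ) : ZMod (2*m))) (fun w => g (w⁻¹ * t))]
  rw [if_pos (Finset.mem_univ _), rm_inv]

lemma conv_fP_right (g : DihedralGroup (2*m) → ℂ) (t : DihedralGroup (2*m)) :
    ∑ w : DihedralGroup (2*m), g w * fP m (w⁻¹ * t) = g (t * r ((m : ℕ) : ZMod (2*m))) := by
  have : ∀ w : DihedralGroup (2*m), fP m (w⁻¹ * t) = if w = t * r ((m : ℕ) : ZMod (2*m)) then 1 else 0 := by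
    intro w
    simp only [fP]
    congr 1
    apply propext
    rw [inv_mul_eq_iff_eq_mul]
    constructor
    · intro h; rw [h, mul_assoc, rm_sq, mul_one]
    · intro h; rw [h, mul_assoc, rm_sq, mul_one]
  simp only [this, mul_ite, mul_one, mul_zero]
  rw [Finset.sum_ite_eq' Finset.univ (t * r ((m : ℕ) : ZMod (2*m))) g]
  simp

end Matrices


section Products

variable {m : ℕ} [NeZero (2*m)]

lemma inv_sr (i : ZMod (2*m)) : (sr i)⁻¹ = sr i := rfl
lemma inv_r (i : ZMod (2*m)) : (r i)⁻¹ = r (-i) := rfl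

lemma ite_mul_ite {P Q : Prop} [Decidable P] [Decidable Q] (h : P ↔ Q) :
    (if P then (m:ℂ) else 0) = (m:ℂ) * (if Q then 1 else 0) := by
  by_cases hp : P
  · rw [if_pos hp, if_pos (h.mp hp), mul_one]
  · rw [if_neg hp, if_neg (fun hq => hp (h.mpr hq)), mul_zero]

lemma MPP : Mk m (fP m) * Mk m (fP m) = 1 := by
  rw [Mk_mul]
  ext x y
  simp only [Mk, Matrix.of_apply, Matrix.one_apply, ← inv_mul_eq_one (a := x) (b := y)]
  generalize x⁻¹ * y = t
  rw [conv_fP_left]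
  cases t with
  | r i =>
    simp only [r_mul_r, fP, one_def]
    congr 1
    apply propext
    constructor
    · intro h
      have h' : ((m:ℕ) : ZMod (2*m)) + i = ((m:ℕ) : ZMod (2*m)) + 0 := by
        rw [add_zero]; exact r.inj h
      exact congrArg r (by linear_combination h')
    · intro h
      rw [r.injEq] at h ⊢
      rw [h, add_zero]
  | sr i =>
    simp only [r_mul_sr, fP]
    simp [one_def, -r_zero]

lemma MPB (hmodd : Odd m) : Mk m (fP m) * Mk m (fB m) = Mk m (fX m) := by
  rw [Mk_mul]
  ext x y
  simp only [Mk, Matrix.of_apply]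
  generalize x⁻¹ * y = t
  rw [conv_fP_left]
  cases t with
  | r i => simp only [r_mul_r, fB, fX]
  | sr i =>
    simp only [r_mul_sr, fB, fX]
    congr 1
    apply propext
    rw [map_sub, par_m hmodd]
    exact (by decide : ∀ a : ZMod 2, (a - 1 = 0 ↔ a = 1)) _

lemma MBP (hmodd : Odd m) : Mk m (fB m) * Mk m (fP m) = Mk m (fX m) := by
  rw [Mk_mul]
  ext x y
  simp only [Mk, Matrix.of_apply]
  generalize x⁻¹ * y = t
  rw [conv_fP_right]
  cases t with
  | r i => simp only [r_mul_r, fB, fX]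
  | sr i =>
    simp only [sr_mul_r, fB, fX]
    congr 1
    apply propext
    rw [map_add, par_m hmodd]
    exact (by decide : ∀ a : ZMod 2, (a + 1 = 0 ↔ a = 1)) _

lemma MBB : Mk m (fB m) * Mk m (fB m) = (m:ℂ) • Mk m (fC m) := by
  rw [Mk_mul]
  ext x y
  simp only [Mk, Matrix.of_apply, Matrix.smul_apply, smul_eq_mul]
  generalize x⁻¹ * y = t
  cases t with
  | r i =>
    rw [sum_dihedral]
    have h1 : ∀ j : ZMod (2*m), fB m (r j) * fB m ((r j)⁻¹ * r i) = 0 := by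
      intro j; simp [fB]
    have h2 : ∀ j : ZMod (2*m), fB m (sr j) * fB m ((sr j)⁻¹ * r i)
        = (if par m j = 0 then (1:ℂ) else 0) * (if par m j = par m i then 1 else 0) := by
      intro j
      rw [inv_sr, sr_mul_r]
      simp only [fB]
      congr 1
      apply if_congr ?_ rfl rfl
      rw [map_add]
      exact (by decide : ∀ a b : ZMod 2, (a + b = 0 ↔ a = b)) _ _
    rw [Finset.sum_congr rfl (fun j _ => h1 j), Finset.sum_congr rfl (fun j _ => h2 j),
      Finset.sum_const_zero, zero_add, sum_ind]
    simp only [fC]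
    exact ite_mul_ite eq_comm
  | sr i =>
    rw [sum_dihedral]
    have h1 : ∀ j : ZMod (2*m), fB m (r j) * fB m ((r j)⁻¹ * sr i) = 0 := by
      intro j; simp [fB]
    have h2 : ∀ j : ZMod (2*m), fB m (sr j) * fB m ((sr j)⁻¹ * sr i) = 0 := by
      intro j; rw [inv_sr, sr_mul_sr]; simp [fB]
    rw [Finset.sum_congr rfl (fun j _ => h1 j), Finset.sum_congr rfl (fun j _ => h2 j)]
    simp [fC]

lemma MXX : Mk m (fX m) * Mk m (fX m) = (m:ℂ) • Mk m (fC m) := by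
  rw [Mk_mul]
  ext x y
  simp only [Mk, Matrix.of_apply, Matrix.smul_apply, smul_eq_mul]
  generalize x⁻¹ * y = t
  cases t with
  | r i =>
    rw [sum_dihedral]
    have h1 : ∀ j : ZMod (2*m), fX m (r j) * fX m ((r j)⁻¹ * r i) = 0 := by
      intro j; simp [fX]
    have h2 : ∀ j : ZMod (2*m), fX m (sr j) * fX m ((sr j)⁻¹ * r i)
        = (if par m j = 1 then (1:ℂ) else 0) * (if par m j = 1 + par m i then 1 else 0) := by
      intro j
      rw [inv_sr, sr_mul_r]
      simp only [fX]
      congr 1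
      apply if_congr ?_ rfl rfl
      rw [map_add]
      exact (by decide : ∀ a b : ZMod 2, (a + b = 1 ↔ a = 1 + b)) _ _
    rw [Finset.sum_congr rfl (fun j _ => h1 j), Finset.sum_congr rfl (fun j _ => h2 j),
      Finset.sum_const_zero, zero_add, sum_ind]
    simp only [fC]
    exact ite_mul_ite ((by decide : ∀ a : ZMod 2, (1 = 1 + a ↔ a = 0)) _)
  | sr i =>
    rw [sum_dihedral]
    have h1 : ∀ j : ZMod (2*m), fX m (r j) * fX m ((r j)⁻¹ * sr i) = 0 := by
      intro j; simp [fX]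
    have h2 : ∀ j : ZMod (2*m), fX m (sr j) * fX m ((sr j)⁻¹ * sr i) = 0 := by
      intro j; rw [inv_sr, sr_mul_sr]; simp [fX]
    rw [Finset.sum_congr rfl (fun j _ => h1 j), Finset.sum_congr rfl (fun j _ => h2 j)]
    simp [fC]

lemma MXC : Mk m (fX m) * Mk m (fC m) = (m:ℂ) • Mk m (fX m) := by
  rw [Mk_mul]
  ext x y
  simp only [Mk, Matrix.of_apply, Matrix.smul_apply, smul_eq_mul]
  generalize x⁻¹ * y = t
  cases t with
  | r i =>
    rw [sum_dihedral]
    have h1 : ∀ j : ZMod (2*m), fX m (r j) * fC m ((r j)⁻¹ * r i) = 0 := by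
      intro j; simp [fX]
    have h2 : ∀ j : ZMod (2*m), fX m (sr j) * fC m ((sr j)⁻¹ * r i) = 0 := by
      intro j; rw [inv_sr, sr_mul_r]; simp [fC]
    rw [Finset.sum_congr rfl (fun j _ => h1 j), Finset.sum_congr rfl (fun j _ => h2 j)]
    simp [fX]
  | sr i =>
    rw [sum_dihedral]
    have h1 : ∀ j : ZMod (2*m), fX m (r j) * fC m ((r j)⁻¹ * sr i) = 0 := by
      intro j; simp [fX]
    have h2 : ∀ j : ZMod (2*m), fX m (sr j) * fC m ((sr j)⁻¹ * sr i)
        = (if par m j = 1 then (1:ℂ) else 0) * (if par m j = par m i then 1 else 0) := by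
      intro j
      rw [inv_sr, sr_mul_sr]
      simp only [fX, fC]
      congr 1
      apply if_congr ?_ rfl rfl
      rw [map_sub]
      exact (by decide : ∀ a b : ZMod 2, (b - a = 0 ↔ a = b)) _ _
    rw [Finset.sum_congr rfl (fun j _ => h1 j), Finset.sum_congr rfl (fun j _ => h2 j),
      Finset.sum_const_zero, zero_add, sum_ind]
    simp only [fX]
    exact ite_mul_ite eq_comm

lemma MCX : Mk m (fC m) * Mk m (fX m) = (m:ℂ) • Mk m (fX m) := by
  rw [Mk_mul]
  ext x y
  simp only [Mk, Matrix.of_apply, Matrix.smul_apply, smul_eq_mul]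
  generalize x⁻¹ * y = t
  cases t with
  | r i =>
    rw [sum_dihedral]
    have h1 : ∀ j : ZMod (2*m), fC m (r j) * fX m ((r j)⁻¹ * r i) = 0 := by
      intro j; rw [inv_r, r_mul_r]; simp [fX]
    have h2 : ∀ j : ZMod (2*m), fC m (sr j) * fX m ((sr j)⁻¹ * r i) = 0 := by
      intro j; simp [fC]
    rw [Finset.sum_congr rfl (fun j _ => h1 j), Finset.sum_congr rfl (fun j _ => h2 j)]
    simp [fX]
  | sr i =>
    rw [sum_dihedral]
    have h1 : ∀ j : ZMod (2*m), fC m (r j) * fX m ((r j)⁻¹ * sr i)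
        = (if par m j = 0 then (1:ℂ) else 0) * (if par m j = par m i + 1 then 1 else 0) := by
      intro j
      rw [inv_r, r_mul_sr]
      simp only [fC, fX]
      congr 1
      apply if_congr ?_ rfl rfl
      rw [sub_neg_eq_add, map_add]
      exact (by decide : ∀ a b : ZMod 2, (b + a = 1 ↔ a = b + 1)) _ _
    have h2 : ∀ j : ZMod (2*m), fC m (sr j) * fX m ((sr j)⁻¹ * sr i) = 0 := by
      intro j; simp [fC]
    rw [Finset.sum_congr rfl (fun j _ => h1 j), Finset.sum_congr rfl (fun j _ => h2 j),
      Finset.sum_const_zero, add_zero, sum_ind]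
    simp only [fX]
    exact ite_mul_ite ((by decide : ∀ a : ZMod 2, (0 = a + 1 ↔ a = 1)) _)

lemma MCC : Mk m (fC m) * Mk m (fC m) = (m:ℂ) • Mk m (fC m) := by
  rw [Mk_mul]
  ext x y
  simp only [Mk, Matrix.of_apply, Matrix.smul_apply, smul_eq_mul]
  generalize x⁻¹ * y = t
  cases t with
  | r i =>
    rw [sum_dihedral]
    have h1 : ∀ j : ZMod (2*m), fC m (r j) * fC m ((r j)⁻¹ * r i)
        = (if par m j = 0 then (1:ℂ) else 0) * (if par m j = par m i then 1 else 0) := by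
      intro j
      rw [inv_r, r_mul_r]
      simp only [fC]
      congr 1
      apply if_congr ?_ rfl rfl
      rw [show -j + i = i - j by ring, map_sub]
      exact (by decide : ∀ a b : ZMod 2, (b - a = 0 ↔ a = b)) _ _
    have h2 : ∀ j : ZMod (2*m), fC m (sr j) * fC m ((sr j)⁻¹ * r i) = 0 := by
      intro j; simp [fC]
    rw [Finset.sum_congr rfl (fun j _ => h1 j), Finset.sum_congr rfl (fun j _ => h2 j),
      Finset.sum_const_zero, add_zero, sum_ind]
    simp only [fC]
    exact ite_mul_ite eq_comm
  | sr i =>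
    rw [sum_dihedral]
    have h1 : ∀ j : ZMod (2*m), fC m (r j) * fC m ((r j)⁻¹ * sr i) = 0 := by
      intro j; rw [inv_r, r_mul_sr]; simp [fC]
    have h2 : ∀ j : ZMod (2*m), fC m (sr j) * fC m ((sr j)⁻¹ * sr i) = 0 := by
      intro j; simp [fC]
    rw [Finset.sum_congr rfl (fun j _ => h1 j), Finset.sum_congr rfl (fun j _ => h2 j)]
    simp [fC]

end Products

end Stmt8Aux

open Stmt8Aux in
/-- Corollary 2.6. For odd `m > 0`, with `S₁ = {a^m}` and
`S₂ = b⟨a²⟩ = {ba^{2k} : 0 ≤ k ≤ m−1}` in `D_{2m}`, the Cayley graph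
`X(D_{2m}, S₁ ∪ S₂)` is connected and integral. -/
theorem stmt8 (m : ℕ) (hmodd : Odd m) (hm : 0 < m) [NeZero (2 * m)]
    (S : Set (DihedralGroup (2 * m)))
    (hS : S = {DihedralGroup.r (m : ZMod (2 * m))} ∪
      {x | ∃ k : ℕ, k < m ∧ x = DihedralGroup.sr ((2 * k : ℕ) : ZMod (2 * m))}) :
    (cayleyGraph S).Connected ∧ IsIntegralGraph (cayleyGraph S) := by
  classical
  subst hS
  set m' : ZMod (2*m) := ((m : ℕ) : ZMod (2*m)) with hm'
  set Sset : Set (DihedralGroup (2*m)) := {DihedralGroup.r (m : ZMod (2 * m))} ∪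
      {x | ∃ k : ℕ, k < m ∧ x = DihedralGroup.sr ((2 * k : ℕ) : ZMod (2 * m))} with hSset
  have hmZ : m' ≠ 0 := by
    intro h
    rw [hm', ZMod.natCast_eq_zero_iff] at h
    have := Nat.le_of_dvd hm h
    omega
  have memsr : ∀ j : ZMod (2*m), (sr j ∈ Sset) ↔ par m j = 0 := by
    intro j
    simp only [hSset, Set.mem_union, Set.mem_singleton_iff, Set.mem_setOf_eq]
    constructor
    · rintro (h | ⟨k, hk, hkeq⟩)
      · exact absurd h (by simp)
      · have hj : j = ((2*k : ℕ) : ZMod (2*m)) := by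
          rw [sr.injEq] at hkeq; exact hkeq
        rw [hj, par_natCast]
        push_cast
        simp [show ((2:ZMod 2) = 0) by decide]
    · intro h
      right
      rw [par_zero_iff] at h
      obtain ⟨k, hk⟩ := h
      have hjlt := ZMod.val_lt j
      refine ⟨k, by omega, ?_⟩
      rw [sr.injEq, show 2*k = j.val from hk.symm, ZMod.natCast_val, ZMod.cast_id]
  have memr : ∀ i : ZMod (2*m), (r i ∈ Sset) ↔ i = m' := by
    intro i
    simp only [hSset, Set.mem_union, Set.mem_singleton_iff, Set.mem_setOf_eq]
    constructor
    · rintro (h | ⟨k, hk, hkeq⟩)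
      · rw [r.injEq] at h; exact h
      · exact absurd hkeq (by simp)
    · intro h; left; rw [h]
  have hSne1 : ∀ s ∈ Sset, s ≠ 1 := by
    intro s hs
    cases s with
    | r i =>
      rw [memr] at hs
      rw [hs, one_def]
      intro hcon
      rw [r.injEq] at hcon
      exact hmZ hcon
    | sr i => rw [DihedralGroup.one_def]; simp [-r_zero]
  have hSinv : ∀ s ∈ Sset, s⁻¹ ∈ Sset := by
    intro s hs
    cases s with
    | r i =>
      rw [memr] at hs
      rw [hs, rm_inv]
      exact (memr _).mpr rfl
    | sr i => rw [Stmt8Aux.inv_sr]; exact hs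
  have adj_iff : ∀ x y, (cayleyGraph Sset).Adj x y ↔ x⁻¹ * y ∈ Sset := by
    intro x y
    rw [cayleyGraph, SimpleGraph.fromRel_adj]
    constructor
    · rintro ⟨hne, h | h⟩
      · exact h
      · have := hSinv _ h
        rwa [mul_inv_rev, inv_inv] at this
    · intro h
      refine ⟨?_, Or.inl h⟩
      intro hxy
      exact hSne1 _ h (by rw [hxy, inv_mul_cancel])
  -- connectivity
  have step : ∀ (x s : DihedralGroup (2*m)), s ∈ Sset → (cayleyGraph Sset).Adj x (x * s) := by
    intro x s hs
    exact (adj_iff x (x*s)).mpr (by simpa using hs)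
  have reach : ∀ g, (cayleyGraph Sset).Reachable 1 g := by
    have hrm : (cayleyGraph Sset).Reachable 1 (r m') := by
      have := step 1 _ ((memr m').mpr rfl)
      rw [one_mul] at this
      exact this.reachable
    have hsr0 : ∀ j, par m j = 0 → (cayleyGraph Sset).Reachable 1 (sr j) := by
      intro j hj
      have := step 1 _ ((memsr j).mpr hj)
      rw [one_mul] at this
      exact this.reachable
    have hre : ∀ i, par m i = 0 → (cayleyGraph Sset).Reachable 1 (r i) := by
      intro i hi
      have h0 : (cayleyGraph Sset).Reachable 1 (sr 0) := hsr0 0 (map_zero _)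
      have hstep := step (sr 0) (sr i) ((memsr i).mpr hi)
      rw [sr_mul_sr, sub_zero] at hstep
      exact h0.trans hstep.reachable
    have hro : ∀ i, par m i = 1 → (cayleyGraph Sset).Reachable 1 (r i) := by
      intro i hi
      have h1 : (cayleyGraph Sset).Reachable 1 (r (i - m')) := by
        apply hre
        rw [map_sub, hm', par_m hmodd, hi, sub_self]
      have hstep := step (r (i - m')) (r m') ((memr _).mpr rfl)
      rw [r_mul_r, sub_add_cancel] at hstep
      exact h1.trans hstep.reachable
    have hsro : ∀ j, par m j = 1 → (cayleyGraph Sset).Reachable 1 (sr j) := by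
      intro j hj
      have hstep := step (r m') (sr (j + m')) ((memsr _).mpr (by
        rw [map_add, hm', par_m hmodd, hj]
        decide))
      rw [r_mul_sr, add_sub_cancel_right] at hstep
      exact hrm.trans hstep.reachable
    intro g
    cases g with
    | r i =>
      rcases (by decide : ∀ a : ZMod 2, a = 0 ∨ a = 1) (par m i) with h | h
      · exact hre i h
      · exact hro i h
    | sr j =>
      rcases (by decide : ∀ a : ZMod 2, a = 0 ∨ a = 1) (par m j) with h | h
      · exact hsr0 j h
      · exact hsro j h
  constructor
  · rw [SimpleGraph.connected_iff]
    exact ⟨fun x y => (reach x).symm.trans (reach y), ⟨1⟩⟩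
  -- integrality
  have hA : adjMat (cayleyGraph Sset) = Mk m (fP m) + Mk m (fB m) := by
    ext x y
    simp only [adjMat, Mk, Matrix.of_apply, Matrix.add_apply]
    by_cases h : (cayleyGraph Sset).Adj x y
    · rw [if_pos h]
      have hmem : x⁻¹*y ∈ Sset := (adj_iff x y).mp h
      cases hg : x⁻¹ * y with
      | r i =>
        rw [hg, memr] at hmem
        simp [fP, fB, hmem, hm']
      | sr j =>
        rw [hg, memsr] at hmem
        simp [fP, fB, hmem]
    · rw [if_neg h]
      have hmem : x⁻¹*y ∉ Sset := fun hc => h ((adj_iff x y).mpr hc)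
      cases hg : x⁻¹ * y with
      | r i =>
        rw [hg, memr] at hmem
        simp [fP, fB, ← hm', hmem]
      | sr j =>
        rw [hg, memsr] at hmem
        simp [fP, fB, hmem]
  set AG := adjMat (cayleyGraph Sset) with hAG
  set c : ℂ := (m : ℂ) with hc
  have h2 : AG * AG = 1 + (2:ℂ) • Mk m (fX m) + c • Mk m (fC m) := by
    rw [hA, add_mul, mul_add, mul_add, MPP, MPB hmodd, MBP hmodd, MBB]
    module
  have hL : AG * AG - 1 = (2:ℂ) • Mk m (fX m) + c • Mk m (fC m) := by
    rw [h2]; module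
  have hfac : (AG * AG - 1) * (Mk m (fC m) - c • 1) = 0 := by
    rw [hL]
    simp only [sub_mul, mul_sub, add_mul, mul_add, smul_mul_assoc, mul_smul_comm,
      one_mul, mul_one, MXX, MXC, MCX, MCC, smul_smul]
    module
  have hE2 : (AG * AG - ((c+1)^2) • 1) * (AG * AG - ((c-1)^2) • 1)
      = ((4:ℂ)*c - c^3) • (Mk m (fC m) - c • 1) := by
    have f1 : AG * AG - ((c+1)^2) • 1
        = ((2:ℂ) • Mk m (fX m) + c • Mk m (fC m) - ((c^2+2*c):ℂ) • 1) := by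
      rw [h2]; module
    have f2 : AG * AG - ((c-1)^2) • 1
        = ((2:ℂ) • Mk m (fX m) + c • Mk m (fC m) - ((c^2-2*c):ℂ) • 1) := by
      rw [h2]; module
    rw [f1, f2]
    simp only [sub_mul, mul_sub, add_mul, mul_add, smul_mul_assoc, mul_smul_comm,
      one_mul, mul_one, MXX, MXC, MCX, MCC, smul_smul]
    module
  have main0 : (AG * AG - 1) * ((AG * AG - ((c+1)^2) • 1) * (AG * AG - ((c-1)^2) • 1)) = 0 := by
    rw [hE2, mul_smul_comm, hfac, smul_zero]
  intro mu hmu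
  rw [spectrum.mem_iff] at hmu
  have hdet : (algebraMap ℂ _ mu - AG).det = 0 := by
    by_contra hne
    exact hmu ((Matrix.isUnit_iff_isUnit_det _).mpr (isUnit_iff_ne_zero.mpr hne))
  obtain ⟨w, hw, hmw⟩ := Matrix.exists_mulVec_eq_zero_iff.mpr hdet
  have heig : AG.mulVec w = mu • w := by
    rw [Matrix.sub_mulVec, Algebra.algebraMap_eq_smul_one, Matrix.smul_mulVec,
      Matrix.one_mulVec, sub_eq_zero] at hmw
    exact hmw.symm
  have hsq : ∀ γ : ℂ, (AG * AG - γ • 1).mulVec w = (mu*mu - γ) • w := by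
    intro γ
    rw [Matrix.sub_mulVec, ← Matrix.mulVec_mulVec, heig, Matrix.mulVec_smul, heig,
      Matrix.smul_mulVec, Matrix.one_mulVec, smul_smul, sub_smul]
  have hone : (AG * AG - 1).mulVec w = (mu*mu - 1) • w := by
    have := hsq 1
    rwa [one_smul] at this
  have hz : ((mu*mu - 1) * ((mu*mu - (c+1)^2) * (mu*mu - (c-1)^2))) • w = 0 := by
    have e1 : ((AG * AG - ((c+1)^2) • 1) * (AG * AG - ((c-1)^2) • 1)).mulVec w
        = ((mu*mu - (c+1)^2) * (mu*mu - (c-1)^2)) • w := by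
      rw [← Matrix.mulVec_mulVec, hsq, Matrix.mulVec_smul, hsq, smul_smul]
      congr 1
      ring
    calc ((mu*mu - 1) * ((mu*mu - (c+1)^2) * (mu*mu - (c-1)^2))) • w
        = ((AG * AG - 1) * ((AG * AG - ((c+1)^2) • 1) * (AG * AG - ((c-1)^2) • 1))).mulVec w := by
          rw [← Matrix.mulVec_mulVec, e1, Matrix.mulVec_smul, hone, smul_smul]
          congr 1
          ring
      _ = 0 := by rw [main0, Matrix.zero_mulVec]
  have hs : (mu*mu - 1) * ((mu*mu - (c+1)^2) * (mu*mu - (c-1)^2)) = 0 := by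
    rcases smul_eq_zero.mp hz with h | h
    · exact h
    · exact absurd h hw
  rcases mul_eq_zero.mp hs with h | h
  · have h' : (mu - 1) * (mu + 1) = 0 := by linear_combination h
    rcases mul_eq_zero.mp h' with h'' | h''
    · exact ⟨1, by push_cast; linear_combination h''⟩
    · exact ⟨-1, by push_cast; linear_combination h''⟩
  rcases mul_eq_zero.mp h with h | h
  · have h' : (mu - (c+1)) * (mu + (c+1)) = 0 := by linear_combination h
    rcases mul_eq_zero.mp h' with h'' | h''
    · exact ⟨(m:ℤ)+1, by push_cast; linear_combination h''⟩
    · exact ⟨-((m:ℤ)+1), by push_cast; linear_combination h''⟩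
  · have h' : (mu - (c-1)) * (mu + (c-1)) = 0 := by linear_combination h
    rcases mul_eq_zero.mp h' with h'' | h''
    · exact ⟨(m:ℤ)-1, by push_cast; linear_combination h''⟩
    · exact ⟨-((m:ℤ)-1), by push_cast; linear_combination h''⟩
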